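/- For every online interval-selection algorithm A with revocable acceptances and every k ≥ 1, there exists a finite list σ of intervals with at most k distinct lengths such that |A(σ)| ≤ 1 and opt(σ) ≥ 2k. (That is, no deterministic algorithm achieves a competitive ratio better than 2k for unweighted interval selection with revocable decisions and k different lengths.) -/

import Mathlib

open scoped Classical

/-- An interval: a pair `(s, f)` of reals with `s < f`, identified with `[s, f) ⊆ ℝ`. -/
structure Ivl where
  s : ℝ
  f : ℝ
  lt : s < f

namespace Ivl

noncomputable instance : DecidableEq Ivl := fun a b =>
  decidable_of_iff (a.s = b.s ∧ a.f = b.f) (by cases a; cases b; simp)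

/-- The set of points covered by an interval. -/
def toSet (I : Ivl) : Set ℝ := Set.Ico I.s I.f

/-- The length of an interval. -/
def length (I : Ivl) : ℝ := I.f - I.s

/-- Two intervals conflict if their point sets intersect. -/
def Conflict (I J : Ivl) : Prop := (I.toSet ∩ J.toSet).Nonempty

/-- A finite set of intervals is feasible (pairwise disjoint) if no two distinct members
conflict. -/
def Feasible (S : Finset Ivl) : Prop :=
  ∀ I ∈ S, ∀ J ∈ S, I ≠ J → ¬ Conflict I J

end Ivl

/-- An online interval-selection algorithm with revocable acceptances: a function from finite
lists of intervals to finite sets of intervals such that the output consists of intervals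
occurring in the input, is pairwise disjoint, and each new output is contained in the previous
output together with the newly arrived interval. -/
structure OnlineAlg where
  run : List Ivl → Finset Ivl
  mem_of_run : ∀ σ : List Ivl, ∀ I ∈ run σ, I ∈ σ
  feasible_run : ∀ σ : List Ivl, Ivl.Feasible (run σ)
  revocable : ∀ (σ : List Ivl) (I : Ivl), run (σ ++ [I]) ⊆ insert I (run σ)

/-- `opt σ` is the maximum cardinality of a pairwise-disjoint finite set of intervals all of
which occur in `σ`. -/
noncomputable def opt (σ : List Ivl) : ℕ :=
  (σ.toFinset.powerset.filter (fun T => Ivl.Feasible T)).sup Finset.card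

namespace LB

lemma ivl_eq_iff {a b : Ivl} : a = b ↔ a.s = b.s ∧ a.f = b.f := by
  constructor
  · rintro rfl; exact ⟨rfl, rfl⟩
  · rcases a with ⟨as, af, ha⟩; rcases b with ⟨bs, bf, hb⟩
    rintro ⟨h1, h2⟩; simp_all

lemma conflict_iff {I J : Ivl} : I.Conflict J ↔ I.s < J.f ∧ J.s < I.f := by
  unfold Ivl.Conflict Ivl.toSet
  rw [Set.Ico_inter_Ico, Set.nonempty_Ico, lt_min_iff, max_lt_iff, max_lt_iff]
  constructor
  · rintro ⟨⟨h1, h2⟩, ⟨h3, h4⟩⟩; exact ⟨h3, h2⟩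
  · rintro ⟨h1, h2⟩; exact ⟨⟨I.lt, h2⟩, ⟨h1, J.lt⟩⟩

lemma not_conflict_iff {I J : Ivl} : ¬ I.Conflict J ↔ J.f ≤ I.s ∨ I.f ≤ J.s := by
  rw [conflict_iff]
  constructor
  · intro h
    rcases le_or_gt J.f I.s with h' | h'
    · exact Or.inl h'
    · rcases le_or_gt I.f J.s with h'' | h''
      · exact Or.inr h''
      · exact absurd ⟨h', h''⟩ h
  · rintro (h | h) ⟨h1, h2⟩ <;> linarith

lemma conflict_self (I : Ivl) : I.Conflict I := conflict_iff.mpr ⟨I.lt, I.lt⟩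

lemma conflict_comm {I J : Ivl} : I.Conflict J ↔ J.Conflict I := by
  rw [conflict_iff, conflict_iff, and_comm]

/-- Pairwise disjointness predicate. -/
def Pairw (S : Finset Ivl) : Prop := ∀ a ∈ S, ∀ b ∈ S, a ≠ b → ¬ a.Conflict b

lemma pairw_empty : Pairw ∅ := by intro a ha; simp at ha

lemma insert_save {S : Finset Ivl} {T : Ivl} (hpair : Pairw S)
    (hdisj : ∀ s ∈ S, ¬ T.Conflict s) :
    Pairw (insert T S) ∧ (insert T S).card = S.card + 1 ∧ S ⊆ insert T S := by
  have hTn : T ∉ S := fun hT => (hdisj T hT) (conflict_self T)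
  refine ⟨?_, Finset.card_insert_of_notMem hTn, Finset.subset_insert _ _⟩
  intro a ha b hb hne
  rcases Finset.mem_insert.mp ha with rfl | ha' <;>
    rcases Finset.mem_insert.mp hb with rfl | hb'
  · exact absurd rfl hne
  · exact hdisj b hb'
  · exact fun hc => (hdisj a ha') (conflict_comm.mp hc)
  · exact hpair a ha' b hb' hne

lemma run_nil (A : OnlineAlg) : A.run [] = ∅ := by
  ext I
  simp only [Finset.notMem_empty, iff_false]
  intro h
  exact absurd (A.mem_of_run [] I h) List.not_mem_nil

lemma run_single {A : OnlineAlg} {σ : List Ivl} (h : A.run σ = ∅) (I : Ivl) :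
    A.run (σ ++ [I]) = ∅ ∨ A.run (σ ++ [I]) = {I} := by
  have := A.revocable σ I
  rw [h] at this
  exact Finset.subset_singleton_iff.mp (by simpa using this)

lemma run_pair {A : OnlineAlg} {σ : List Ivl} {X : Ivl} (h : A.run σ = {X}) (I : Ivl)
    (hc : I.Conflict X) (hne : I ≠ X) :
    A.run (σ ++ [I]) = ∅ ∨ A.run (σ ++ [I]) = {X} ∨ A.run (σ ++ [I]) = {I} := by
  have hsub : A.run (σ ++ [I]) ⊆ {I, X} := by
    have := A.revocable σ I
    rw [h] at this
    simpa using this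
  by_cases hI : I ∈ A.run (σ ++ [I])
  · by_cases hX : X ∈ A.run (σ ++ [I])
    · exact absurd hc (A.feasible_run (σ ++ [I]) I hI X hX hne)
    · right; right
      apply Finset.Subset.antisymm
      · intro x hx
        rcases Finset.mem_insert.mp (hsub hx) with rfl | hx'
        · exact Finset.mem_singleton_self _
        · rw [Finset.mem_singleton] at hx'; subst hx'; exact absurd hx hX
      · intro x hx; rw [Finset.mem_singleton] at hx; subst hx; exact hI
  · by_cases hX : X ∈ A.run (σ ++ [I])
    · right; left
      apply Finset.Subset.antisymm
      · intro x hx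
        rcases Finset.mem_insert.mp (hsub hx) with rfl | hx'
        · exact absurd hx hI
        · exact hx'
      · intro x hx; rw [Finset.mem_singleton] at hx; subst hx; exact hX
    · left
      rw [Finset.eq_empty_iff_forall_notMem]
      intro x hx
      rcases Finset.mem_insert.mp (hsub hx) with rfl | hx'
      · exact hI hx
      · rw [Finset.mem_singleton] at hx'; subst hx'; exact hX hx

lemma le_opt {σ : List Ivl} {T : Finset Ivl} (hT : Ivl.Feasible T)
    (hmem : ∀ I ∈ T, I ∈ σ) : T.card ≤ opt σ := by
  apply Finset.le_sup
  rw [Finset.mem_filter, Finset.mem_powerset]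
  exact ⟨fun I hI => List.mem_toFinset.mpr (hmem I hI), hT⟩

lemma lengths_card_le {σ : List Ivl} {k : ℕ} (L : ℕ → ℝ)
    (h : ∀ I ∈ σ, ∃ j, 1 ≤ j ∧ j ≤ k ∧ I.length = L j) :
    (σ.map Ivl.length).toFinset.card ≤ k := by
  have hsub : (σ.map Ivl.length).toFinset ⊆ (Finset.Icc 1 k).image L := by
    intro x hx
    rw [List.mem_toFinset, List.mem_map] at hx
    rcases hx with ⟨I, hI, rfl⟩
    rcases h I hI with ⟨j, h1, h2, h3⟩
    rw [Finset.mem_image]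
    exact ⟨j, Finset.mem_Icc.mpr ⟨h1, h2⟩, h3.symm⟩
  calc (σ.map Ivl.length).toFinset.card ≤ ((Finset.Icc 1 k).image L).card :=
        Finset.card_le_card hsub
    _ ≤ (Finset.Icc 1 k).card := Finset.card_image_le
    _ = k := by rw [Nat.card_Icc]; omega

end LB
namespace LB

/-- Mirror an interval across 0 (as an abstract involution preserving the conflict
relation and lengths). -/
def mIvl (I : Ivl) : Ivl := ⟨-I.f, -I.s, by have := I.lt; linarith⟩

@[simp] lemma mIvl_s (I : Ivl) : (mIvl I).s = -I.f := rfl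
@[simp] lemma mIvl_f (I : Ivl) : (mIvl I).f = -I.s := rfl

@[simp] lemma mIvl_invol (I : Ivl) : mIvl (mIvl I) = I := by
  rw [ivl_eq_iff]; simp [mIvl]

lemma mIvl_inj : Function.Injective mIvl :=
  Function.LeftInverse.injective mIvl_invol

@[simp] lemma mIvl_len (I : Ivl) : (mIvl I).length = I.length := by
  simp [mIvl, Ivl.length]; ring

lemma mIvl_conflict {I J : Ivl} : (mIvl I).Conflict (mIvl J) ↔ I.Conflict J := by
  rw [conflict_iff, conflict_iff]
  simp only [mIvl_s, mIvl_f]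
  constructor <;> (rintro ⟨h1, h2⟩; constructor <;> linarith)

@[simp] lemma map_mIvl_mIvl (σ : List Ivl) : (σ.map mIvl).map mIvl = σ := by
  rw [List.map_map]
  have : mIvl ∘ mIvl = id := funext mIvl_invol
  rw [this, List.map_id]

/-- The mirrored algorithm. -/
noncomputable def mAlg (A : OnlineAlg) : OnlineAlg where
  run σ := (A.run (σ.map mIvl)).image mIvl
  mem_of_run := by
    intro σ I hI
    rw [Finset.mem_image] at hI
    rcases hI with ⟨J, hJ, rfl⟩
    have h1 := A.mem_of_run _ J hJ
    have h2 : mIvl J ∈ (σ.map mIvl).map mIvl := List.mem_map_of_mem (f := mIvl) h1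
    rwa [map_mIvl_mIvl] at h2
  feasible_run := by
    intro σ I hI J hJ hne
    rw [Finset.mem_image] at hI hJ
    rcases hI with ⟨I', hI', rfl⟩
    rcases hJ with ⟨J', hJ', rfl⟩
    rw [mIvl_conflict]
    exact A.feasible_run _ I' hI' J' hJ' (fun h => hne (by rw [h]))
  revocable := by
    intro σ I x hx
    rw [Finset.mem_image] at hx
    rcases hx with ⟨y, hy, rfl⟩
    have hy' : y ∈ A.run ((σ.map mIvl) ++ [mIvl I]) := by
      simpa [List.map_append] using hy
    have := A.revocable (σ.map mIvl) (mIvl I) hy'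
    rcases Finset.mem_insert.mp this with rfl | h'
    · simp
    · exact Finset.mem_insert_of_mem (Finset.mem_image_of_mem _ h')

lemma mAlg_run (A : OnlineAlg) (σ : List Ivl) :
    (mAlg A).run (σ.map mIvl) = (A.run σ).image mIvl := by
  show (A.run ((σ.map mIvl).map mIvl)).image mIvl = _
  rw [map_mIvl_mIvl]

lemma mAlg_run_card (A : OnlineAlg) (σ : List Ivl) :
    ((mAlg A).run (σ.map mIvl)).card = (A.run σ).card := by
  rw [mAlg_run]
  exact Finset.card_image_of_injective _ mIvl_inj

end LB
namespace LB

/-- Ratio between consecutive lengths. -/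
noncomputable def QQ (k : ℕ) : ℝ := 100 * ((k : ℝ) + 2) ^ 2

lemma QQ_pos (k : ℕ) : 0 < QQ k := by
  have : (0:ℝ) < (k:ℝ) + 2 := by positivity
  unfold QQ; positivity

lemma QQ_ge (k : ℕ) : 400 ≤ QQ k := by
  unfold QQ
  have h : (2:ℝ) ≤ (k:ℝ) + 2 := by
    have : (0:ℝ) ≤ (k:ℝ) := Nat.cast_nonneg k
    linarith
  nlinarith [h]

/-- The k admissible lengths are `LL k 1 > LL k 2 > ... > LL k k`. -/
noncomputable def LL (k j : ℕ) : ℝ := (QQ k)⁻¹ ^ j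

lemma LL_pos (k j : ℕ) : 0 < LL k j := by
  unfold LL
  exact pow_pos (inv_pos.mpr (QQ_pos k)) j

lemma LL_succ (k j : ℕ) : LL k (j + 1) * QQ k = LL k j := by
  unfold LL
  rw [pow_succ, mul_assoc]
  rw [inv_mul_cancel₀ (ne_of_gt (QQ_pos k)), mul_one]

/-- Postcondition bundle for the adversary construction. -/
def Done (A : OnlineAlg) (k : ℕ) (σ : List Ivl) (S : Finset Ivl) (n : ℕ)
    (lo hi Lg Rg : ℝ) : Prop :=
  ∃ τ S', S ⊆ S' ∧ S.card + n ≤ S'.card ∧ Pairw S' ∧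
    (∀ s ∈ S', s ∈ σ ++ τ) ∧
    (A.run (σ ++ τ)).card ≤ 1 ∧
    (∀ I ∈ τ, ∃ j, 1 ≤ j ∧ j ≤ k ∧ I.length = LL k j) ∧
    (∀ I ∈ τ, (lo ≤ I.s ∧ I.f ≤ hi) ∨ Rg ≤ I.s ∨ I.f ≤ Lg)

lemma done_exit {A : OnlineAlg} {k : ℕ} {σ : List Ivl} {S : Finset Ivl} {n : ℕ}
    {lo hi Lg Rg : ℝ} {S' : Finset Ivl}
    (hSS : S ⊆ S') (hcard : S.card + n ≤ S'.card) (hpair : Pairw S')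
    (hmem : ∀ s ∈ S', s ∈ σ) (hrun : (A.run σ).card ≤ 1) :
    Done A k σ S n lo hi Lg Rg := by
  refine ⟨[], S', hSS, hcard, hpair, ?_, ?_, ?_, ?_⟩
  · intro s hs; simpa using hmem s hs
  · simpa using hrun
  · intro I hI; exact absurd hI List.not_mem_nil
  · intro I hI; exact absurd hI List.not_mem_nil

lemma done_glue {A : OnlineAlg} {k : ℕ} {σ : List Ivl} {S : Finset Ivl} {n : ℕ}
    {lo hi Lg Rg : ℝ} (I : Ivl) {S' : Finset Ivl} {n' : ℕ} {lo' hi' Lg' Rg' : ℝ}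
    (h : Done A k (σ ++ [I]) S' n' lo' hi' Lg' Rg')
    (hSS : S ⊆ S') (hcard : S.card + n ≤ S'.card + n')
    (hlen : ∃ j, 1 ≤ j ∧ j ≤ k ∧ I.length = LL k j)
    (hspan : lo ≤ I.s ∧ I.f ≤ hi)
    (hlo : lo ≤ lo') (hhi : hi' ≤ hi) (hRg : Rg ≤ Rg') (hLg : Lg' ≤ Lg) :
    Done A k σ S n lo hi Lg Rg := by
  obtain ⟨τ, S'', h1, h2, h3, h4, h5, h6, h7⟩ := h
  have hassoc : σ ++ I :: τ = (σ ++ [I]) ++ τ := by simp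
  refine ⟨I :: τ, S'', hSS.trans h1, by omega, h3, ?_, ?_, ?_, ?_⟩
  · intro s hs; rw [hassoc]; exact h4 s hs
  · rw [hassoc]; exact h5
  · intro J hJ
    rcases List.mem_cons.mp hJ with rfl | hJ'
    · exact hlen
    · exact h6 J hJ'
  · intro J hJ
    rcases List.mem_cons.mp hJ with rfl | hJ'
    · exact Or.inl hspan
    · rcases h7 J hJ' with ⟨ha, hb⟩ | hb | hb
      · exact Or.inl ⟨le_trans hlo ha, le_trans hb hhi⟩
      · exact Or.inr (Or.inl (le_trans hRg hb))
      · exact Or.inr (Or.inr (le_trans hb hLg))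

lemma done_mirror {A : OnlineAlg} {k : ℕ} {σ : List Ivl} {S : Finset Ivl} {n : ℕ}
    {lo hi Lg Rg lo' hi' : ℝ} (he1 : lo' = -hi) (he2 : hi' = -lo)
    (h : Done (mAlg A) k (σ.map mIvl) (S.image mIvl) n lo' hi' (-Rg) (-Lg)) :
    Done A k σ S n lo hi Lg Rg := by
  subst he1 he2
  obtain ⟨τ, S'', h1, h2, h3, h4, h5, h6, h7⟩ := h
  refine ⟨τ.map mIvl, S''.image mIvl, ?_, ?_, ?_, ?_, ?_, ?_, ?_⟩
  · intro s hs
    have : mIvl s ∈ S'' := h1 (Finset.mem_image_of_mem _ hs)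
    have := Finset.mem_image_of_mem mIvl this
    rwa [mIvl_invol] at this
  · rw [Finset.card_image_of_injective _ mIvl_inj]
    rw [Finset.card_image_of_injective _ mIvl_inj] at h2
    exact h2
  · intro a ha b hb hne
    rw [Finset.mem_image] at ha hb
    rcases ha with ⟨a', ha', rfl⟩
    rcases hb with ⟨b', hb', rfl⟩
    rw [mIvl_conflict]
    exact h3 a' ha' b' hb' (fun hh => hne (by rw [hh]))
  · intro s hs
    rw [Finset.mem_image] at hs
    rcases hs with ⟨t, ht, rfl⟩
    have := h4 t ht
    have h' := List.mem_map_of_mem (f := mIvl) this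
    rw [List.map_append, map_mIvl_mIvl] at h'
    exact h'
  · have key : ((σ ++ τ.map mIvl).map mIvl) = σ.map mIvl ++ τ := by
      rw [List.map_append, map_mIvl_mIvl]
    have hc := mAlg_run_card A (σ ++ τ.map mIvl)
    rw [key] at hc
    rw [hc] at h5
    exact h5
  · intro I hI
    rw [List.mem_map] at hI
    rcases hI with ⟨J, hJ, rfl⟩
    rcases h6 J hJ with ⟨j, hj1, hj2, hj3⟩
    exact ⟨j, hj1, hj2, by rw [mIvl_len]; exact hj3⟩
  · intro I hI
    rw [List.mem_map] at hI
    rcases hI with ⟨J, hJ, rfl⟩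
    rcases h7 J hJ with ⟨ha, hb⟩ | hb | hb
    · refine Or.inl ⟨?_, ?_⟩ <;> simp only [mIvl_s, mIvl_f] <;> linarith
    · refine Or.inr (Or.inr ?_); simp only [mIvl_f]; linarith
    · refine Or.inr (Or.inl ?_); simp only [mIvl_s]; linarith

end LB
namespace LB

lemma pairw_image {S : Finset Ivl} (h : Pairw S) : Pairw (S.image mIvl) := by
  intro a ha b hb hne
  rw [Finset.mem_image] at ha hb
  rcases ha with ⟨a', ha', rfl⟩
  rcases hb with ⟨b', hb', rfl⟩
  rw [mIvl_conflict]
  exact h a' ha' b' hb' fun hh => hne (by rw [hh])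

lemma pitch_small (k j n : ℕ) (hn : n ≤ 2*k + 2) :
    ((n:ℝ)+1) * ((8*(k:ℝ)+30) * LL k (j+1)) ≤ LL k j / 3 := by
  have h1 : LL k (j+1) * QQ k = LL k j := LL_succ k j
  have h2 : 0 < LL k (j+1) := LL_pos k (j+1)
  have h3 : (n:ℝ) ≤ 2*(k:ℝ)+2 := by exact_mod_cast hn
  have h4 : 0 ≤ (k:ℝ) := Nat.cast_nonneg k
  have key : ((n:ℝ)+1) * (8*(k:ℝ)+30) ≤ QQ k / 3 := by
    have h5 : QQ k = 100*((k:ℝ)+2)^2 := rfl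
    nlinarith [h3, h4]
  calc ((n:ℝ)+1) * ((8*(k:ℝ)+30) * LL k (j+1))
      = (((n:ℝ)+1) * (8*(k:ℝ)+30)) * LL k (j+1) := by ring
    _ ≤ (QQ k / 3) * LL k (j+1) := by
        apply mul_le_mul_of_nonneg_right key (le_of_lt h2)
    _ = (LL k (j+1) * QQ k) / 3 := by ring
    _ = LL k j / 3 := by rw [h1]

/-- Harvest state: zone `[a,b)` free of saves, algorithm holds `Ho` (covering the zone
if present). -/
def PH (k N : ℕ) : Prop :=
  ∀ (A : OnlineAlg) (σ : List Ivl) (S : Finset Ivl) (n j : ℕ) (a b Lg Rg : ℝ)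
    (Ho : Option Ivl),
    8*n+7 ≤ N → Pairw S → (∀ s ∈ S, s ∈ σ) → (∀ s ∈ S, Lg ≤ s.s ∧ s.f ≤ Rg) →
    n ≤ 2*k → 1 ≤ j → j ≤ k → n + 2*j ≤ 2*k+2 →
    A.run σ = (Ho.elim ∅ fun X => {X}) →
    (∀ X, Ho = some X → Set.Ico a b ⊆ X.toSet) →
    (∀ s ∈ S, s.f ≤ a ∨ b ≤ s.s) →
    ((n:ℝ)+1) * ((8*(k:ℝ)+30) * LL k j) ≤ b - a →
    Lg ≤ a → b ≤ Rg →
    Done A k σ S n a b Lg Rg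

/-- Fresh latch state: algorithm holds `X`, both sides free. -/
def PF (k N : ℕ) : Prop :=
  ∀ (A : OnlineAlg) (σ : List Ivl) (S : Finset Ivl) (n j : ℕ) (Lg Rg : ℝ) (X : Ivl),
    8*n+6 ≤ N → Pairw S → (∀ s ∈ S, s ∈ σ) → (∀ s ∈ S, Lg ≤ s.s ∧ s.f ≤ Rg) →
    n ≤ 2*k → 1 ≤ j → j ≤ k → n + 2*j ≤ 2*k+2 →
    A.run σ = {X} → X.f = X.s + LL k j →
    (∀ s ∈ S, s.f ≤ X.s - (2*(n:ℝ)+5)*LL k j ∨ X.s + (2*(n:ℝ)+6)*LL k j ≤ s.s) →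
    Lg ≤ X.s - (2*(n:ℝ)+9)*LL k j → X.s + (2*(n:ℝ)+9)*LL k j ≤ Rg →
    Done A k σ S n (X.s - (2*(n:ℝ)+9)*LL k j) (X.s + (2*(n:ℝ)+9)*LL k j) Lg Rg

/-- Rightward-marching latch with an unsaved predecessor `P` that is disjoint from all
saves ("flag true"). -/
def PT (k N : ℕ) : Prop :=
  ∀ (A : OnlineAlg) (σ : List Ivl) (S : Finset Ivl) (n j : ℕ) (Lg Rg : ℝ) (X P : Ivl),
    8*n+4 ≤ N → Pairw S → (∀ s ∈ S, s ∈ σ) → (∀ s ∈ S, Lg ≤ s.s ∧ s.f ≤ Rg) →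
    n ≤ 2*k → 1 ≤ j → j ≤ k → n + 2*j ≤ 2*k+2 →
    A.run σ = {X} → X.f = X.s + LL k j →
    P.s = X.s - 3*LL k j/4 → P.f = X.s + LL k j/4 → P ∈ σ →
    (∀ s ∈ S, s.f ≤ X.s - 3*LL k j/4 ∨ X.s + (2*(n:ℝ)+5)*LL k j ≤ s.s) →
    Lg ≤ X.s - (2*(n:ℝ)+8)*LL k j → X.s + (2*(n:ℝ)+8)*LL k j ≤ Rg →
    Done A k σ S n (X.s - (2*(n:ℝ)+8)*LL k j) (X.s + (2*(n:ℝ)+8)*LL k j) Lg Rg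

/-- Rightward-marching latch whose predecessor has just been saved ("flag false"). -/
def PFa (k N : ℕ) : Prop :=
  ∀ (A : OnlineAlg) (σ : List Ivl) (S : Finset Ivl) (n j : ℕ) (Lg Rg : ℝ) (X : Ivl),
    8*n+5 ≤ N → Pairw S → (∀ s ∈ S, s ∈ σ) → (∀ s ∈ S, Lg ≤ s.s ∧ s.f ≤ Rg) →
    n ≤ 2*k → 1 ≤ j → j ≤ k → n + 1 + 2*j ≤ 2*k+2 →
    A.run σ = {X} → X.f = X.s + LL k j →
    (∀ s ∈ S, s.f ≤ X.s ∨ X.s + (2*(n:ℝ)+6)*LL k j ≤ s.s) →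
    Lg ≤ X.s - (2*(n:ℝ)+9)*LL k j → X.s + (2*(n:ℝ)+9)*LL k j ≤ Rg →
    Done A k σ S n (X.s - (2*(n:ℝ)+9)*LL k j) (X.s + (2*(n:ℝ)+9)*LL k j) Lg Rg

lemma jump_done {k N : ℕ} (hPH : PH k N) (hk : 1 ≤ k) {A : OnlineAlg} {σ : List Ivl}
    {S : Finset Ivl} {n : ℕ} {Lg Rg : ℝ} (lo hi : ℝ)
    (hN : 8*n+7 ≤ N) (hpair : Pairw S) (hmem : ∀ s ∈ S, s ∈ σ)
    (hbnd : ∀ s ∈ S, Lg ≤ s.s ∧ s.f ≤ Rg) (hnk : n ≤ 2*k)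
    (hrun : A.run σ = ∅) (hLR : Lg ≤ Rg) :
    Done A k σ S n lo hi Lg Rg := by
  have hL1 : 0 < LL k 1 := LL_pos k 1
  have hp1 : 0 ≤ ((n:ℝ)+1)*((8*(k:ℝ)+30)*LL k 1) :=
    mul_nonneg (by linarith [Nat.cast_nonneg (α := ℝ) n])
      (mul_nonneg (by linarith [Nat.cast_nonneg (α := ℝ) k]) hL1.le)
  have hd := hPH A σ S n 1 (Rg+1) (Rg + 1 + ((n:ℝ)+1)*((8*(k:ℝ)+30)*LL k 1)) Lg
      (Rg + 1 + ((n:ℝ)+1)*((8*(k:ℝ)+30)*LL k 1)) none hN hpair hmem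
      (fun s hs => ⟨(hbnd s hs).1, by linarith [(hbnd s hs).2]⟩) hnk (le_refl 1) hk
      (by omega) hrun (fun Y hY => nomatch hY)
      (fun s hs => Or.inl (by linarith [(hbnd s hs).2]))
      (by linarith) (by linarith) (le_refl _)
  obtain ⟨τ, S', d1, d2, d3, d4, d5, d6, d7⟩ := hd
  refine ⟨τ, S', d1, d2, d3, d4, d5, d6, ?_⟩
  intro I hI
  rcases d7 I hI with ⟨h1, h2⟩ | h1 | h1
  · exact Or.inr (Or.inl (by linarith))
  · exact Or.inr (Or.inl (by linarith))
  · exact Or.inr (Or.inr h1)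

set_option maxHeartbeats 2000000 in
theorem AllP (k : ℕ) (hk : 1 ≤ k) : ∀ N : ℕ, PH k N ∧ PF k N ∧ PT k N ∧ PFa k N := by
  intro N
  induction N with
  | zero =>
    refine ⟨?_, ?_, ?_, ?_⟩
    · intro A σ S n j a b Lg Rg Ho hN
      exact absurd hN (by omega)
    · intro A σ S n j Lg Rg X hN
      exact absurd hN (by omega)
    · intro A σ S n j Lg Rg X P hN
      exact absurd hN (by omega)
    · intro A σ S n j Lg Rg X hN
      exact absurd hN (by omega)
  | succ N ih =>
    obtain ⟨ihH, ihF, ihT, ihFa⟩ := ih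
    refine ⟨?_, ?_, ?_, ?_⟩
    · -- H case
      intro A σ S n j a b Lg Rg Ho hN hpair hmem hbnd hnk hj1 hjk hnj hrun hcont hzone hw hLa hbR
      have hℓ : 0 < LL k j := LL_pos k j
      have hn0 : (0:ℝ) ≤ (n:ℝ) := Nat.cast_nonneg n
      have hk0 : (0:ℝ) ≤ (k:ℝ) := Nat.cast_nonneg k
      have hnkR : (n:ℝ) ≤ 2*(k:ℝ) := by exact_mod_cast hnk
      rcases Nat.eq_zero_or_pos n with rfl | hn1
      · refine done_exit (le_refl S) (by omega) hpair hmem ?_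
        cases Ho with
        | none => rw [show A.run σ = ∅ from hrun]; simp
        | some X => rw [show A.run σ = {X} from hrun]; simp
      · have hnR1 : (1:ℝ) ≤ (n:ℝ) := by exact_mod_cast hn1
        have hP0 : (0:ℝ) ≤ (8*(k:ℝ)+30) * LL k j := mul_nonneg (by linarith) hℓ.le
        have hP0' : (0:ℝ) ≤ (n:ℝ) * ((8*(k:ℝ)+30) * LL k j) := mul_nonneg hn0 hP0
        have hpitch : (8*(k:ℝ)+30)*LL k j ≤ b - a := by linarith [hw, hP0']
        have hkl : 0 ≤ (k:ℝ) * LL k j := mul_nonneg hk0 hℓ.le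
        have hnl : 0 ≤ (n:ℝ) * LL k j := mul_nonneg hn0 hℓ.le
        have hnkl : (n:ℝ) * LL k j ≤ 2*((k:ℝ) * LL k j) := by
          have := mul_le_mul_of_nonneg_right hnkR hℓ.le
          linarith [this]
        have hT0lt : a + (4*(k:ℝ)+15)*LL k j < a + (4*(k:ℝ)+15)*LL k j + LL k j := by linarith
        obtain ⟨T₀, hT0s, hT0f⟩ : ∃ T : Ivl, T.s = a + (4*(k:ℝ)+15)*LL k j ∧
            T.f = a + (4*(k:ℝ)+15)*LL k j + LL k j := ⟨⟨_, _, hT0lt⟩, rfl, rfl⟩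
        have haT0 : a < T₀.s := by rw [hT0s]; linarith [hkl, hℓ]
        have hT0b : T₀.f ≤ a + (8*(k:ℝ)+30)*LL k j := by rw [hT0f]; linarith [hkl, hℓ]
        have hT0b' : T₀.f ≤ b := by linarith
        have hT0S : ∀ s ∈ S, ¬ T₀.Conflict s := by
          intro s hs
          rw [not_conflict_iff]
          rcases hzone s hs with h | h
          · left; linarith
          · right; linarith
        have hT0len : ∃ i, 1 ≤ i ∧ i ≤ k ∧ T₀.length = LL k i :=
          ⟨j, hj1, hjk, by simp only [Ivl.length, hT0f, hT0s]; ring⟩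
        have hT0span : a ≤ T₀.s ∧ T₀.f ≤ b := ⟨le_of_lt haT0, hT0b'⟩
        have refuse : ∀ Ho' : Option Ivl,
            A.run (σ ++ [T₀]) = (Ho'.elim ∅ fun Y => {Y}) →
            (∀ Y, Ho' = some Y → Set.Ico (a + (8*(k:ℝ)+30)*LL k j) b ⊆ Y.toSet) →
            Done A k σ S n a b Lg Rg := by
          intro Ho' hrun' hcont'
          obtain ⟨hp', hc', hsub'⟩ := insert_save hpair hT0S
          have hcast : ((n-1:ℕ):ℝ) = (n:ℝ) - 1 := by
            rw [Nat.cast_sub hn1]; norm_num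
          have hd : Done A k (σ ++ [T₀]) (insert T₀ S) (n-1)
              (a + (8*(k:ℝ)+30)*LL k j) b Lg Rg := by
            apply ihH A (σ ++ [T₀]) (insert T₀ S) (n-1) j _ _ Lg Rg Ho' (by omega)
              hp' ?_ ?_ (by omega) hj1 hjk (by omega) hrun' hcont' ?_ ?_ ?_ hbR
            · intro s hs
              rcases Finset.mem_insert.mp hs with rfl | hs'
              · exact List.mem_append_right σ (List.mem_singleton_self _)
              · exact List.mem_append_left _ (hmem s hs')
            · intro s hs
              rcases Finset.mem_insert.mp hs with rfl | hs'
              · exact ⟨by rw [hT0s]; linarith, by linarith⟩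
              · exact hbnd s hs'
            · intro s hs
              rcases Finset.mem_insert.mp hs with rfl | hs'
              · left; exact hT0b
              · rcases hzone s hs' with h | h
                · left; linarith
                · right; exact h
            · rw [hcast]; linarith [hw]
            · linarith
          exact done_glue T₀ hd hsub' (by omega) hT0len hT0span (by linarith) (le_refl b)
            (le_refl Rg) (le_refl Lg)
        have take : A.run (σ ++ [T₀]) = {T₀} → Done A k σ S n a b Lg Rg := by
          intro hr
          have hzone' : ∀ s ∈ S, s.f ≤ T₀.s - (2*(n:ℝ)+5)*LL k j ∨
              T₀.s + (2*(n:ℝ)+6)*LL k j ≤ s.s := by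
            intro s hs
            rcases hzone s hs with h | h
            · left; rw [hT0s]; linarith [hnkl, hℓ]
            · right; rw [hT0s]; linarith [hnkl, hℓ, hpitch]
          have hLg' : Lg ≤ T₀.s - (2*(n:ℝ)+9)*LL k j := by
            rw [hT0s]; linarith [hnkl, hℓ]
          have hRg' : T₀.s + (2*(n:ℝ)+9)*LL k j ≤ Rg := by
            rw [hT0s]; linarith [hnkl, hℓ, hpitch]
          have hd := ihF A (σ ++ [T₀]) S n j Lg Rg T₀ (by omega) hpair
            (fun s hs => List.mem_append_left _ (hmem s hs)) hbnd hnk hj1 hjk hnj hr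
            (by rw [hT0f, hT0s]) hzone' hLg' hRg'
          refine done_glue T₀ hd (le_refl S) (le_refl _) hT0len hT0span ?_ ?_
            (le_refl Rg) (le_refl Lg)
          · rw [hT0s]; linarith [hnkl, hℓ]
          · rw [hT0s]; linarith [hnkl, hℓ, hpitch]
        cases Ho with
        | none =>
          have hrn : A.run σ = ∅ := hrun
          rcases run_single hrn T₀ with h | h
          · exact refuse none h (fun Y hY => nomatch hY)
          · exact take h
        | some X =>
          have hrn : A.run σ = {X} := hrun
          have hsubX : Set.Ico a b ⊆ X.toSet := hcont X rfl
          have hab : a < b := by linarith [hkl, hℓ, hpitch]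
          have hXs : X.s ≤ a := (hsubX ⟨le_refl a, hab⟩).1
          have hconf : T₀.Conflict X := by
            rw [conflict_iff]
            have h1 : T₀.s ∈ X.toSet := hsubX ⟨le_of_lt haT0, by
              have := T₀.lt; linarith⟩
            exact ⟨h1.2, by have := T₀.lt; linarith [h1.1, hXs]⟩
          have hne : T₀ ≠ X := by
            intro he
            have h2 := hXs
            rw [← he] at h2
            linarith
          rcases run_pair hrn T₀ hconf hne with h | h | h
          · exact refuse none h (fun Y hY => nomatch hY)
          · refine refuse (some X) h ?_
            intro Y hY
            injection hY with hY'
            subst hY'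
            intro y hy
            exact hsubX ⟨by linarith [hy.1, hkl, hℓ], hy.2⟩
          · exact take h
    · -- F case
      intro A σ S n j Lg Rg X hN hpair hmem hbnd hnk hj1 hjk hnj hrun hXf hzone hLg hRg
      have hℓ : 0 < LL k j := LL_pos k j
      have hn0 : (0:ℝ) ≤ (n:ℝ) := Nat.cast_nonneg n
      have hk0 : (0:ℝ) ≤ (k:ℝ) := Nat.cast_nonneg k
      have hnl : 0 ≤ (n:ℝ) * LL k j := mul_nonneg hn0 hℓ.le
      have hXmem : X ∈ σ := A.mem_of_run σ X (by rw [hrun]; exact Finset.mem_singleton_self X)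
      have hLR : Lg ≤ Rg := by linarith [hnl, hℓ]
      rcases Nat.eq_zero_or_pos n with rfl | hn1
      · exact done_exit (le_refl S) (by omega) hpair hmem (by rw [hrun]; simp)
      have hnR1 : (1:ℝ) ≤ (n:ℝ) := by exact_mod_cast hn1
      have hcast : ((n-1:ℕ):ℝ) = (n:ℝ) - 1 := by rw [Nat.cast_sub hn1]; norm_num
      have hMRlt : X.s + 3*LL k j/4 < X.s + 7*LL k j/4 := by linarith
      obtain ⟨MR, hMRs, hMRf⟩ : ∃ T : Ivl, T.s = X.s + 3*LL k j/4 ∧ T.f = X.s + 7*LL k j/4 :=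
        ⟨⟨_, _, hMRlt⟩, rfl, rfl⟩
      have hMRlen : ∃ i, 1 ≤ i ∧ i ≤ k ∧ MR.length = LL k i :=
        ⟨j, hj1, hjk, by simp only [Ivl.length, hMRf, hMRs]; ring⟩
      have hMRspan : X.s - (2*(n:ℝ)+9)*LL k j ≤ MR.s ∧ MR.f ≤ X.s + (2*(n:ℝ)+9)*LL k j := by
        constructor
        · rw [hMRs]; linarith [hnl, hℓ]
        · rw [hMRf]; linarith [hnl, hℓ]
      have hconfMR : MR.Conflict X := by
        rw [conflict_iff, hMRs, hMRf, hXf]; constructor <;> linarith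
      have hneMR : MR ≠ X := by
        intro he
        have h2 : MR.s = X.s := congrArg Ivl.s he
        rw [hMRs] at h2; linarith
      have hMRS : ∀ s ∈ S, ¬ MR.Conflict s := by
        intro s hs
        rw [not_conflict_iff, hMRs, hMRf]
        rcases hzone s hs with h | h
        · left; linarith [hnl, hℓ]
        · right; linarith [hnl, hℓ]
      have hMRbnd : Lg ≤ MR.s ∧ MR.f ≤ Rg := by
        constructor
        · rw [hMRs]; linarith [hnl, hℓ]
        · rw [hMRf]; linarith [hnl, hℓ]
      have hMRmem : MR ∈ σ ++ [MR] := List.mem_append_right σ (List.mem_singleton_self _)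
      rcases run_pair hrun MR hconfMR hneMR with hret | hret | hret
      · -- run became empty: save X, jump right
        have hXS : ∀ s ∈ S, ¬ X.Conflict s := by
          intro s hs
          rw [not_conflict_iff, hXf]
          rcases hzone s hs with h | h
          · left; linarith [hnl, hℓ]
          · right; linarith [hnl, hℓ]
        obtain ⟨hp1, hc1, hsub1⟩ := insert_save hpair hXS
        have hd : Done A k (σ ++ [MR]) (insert X S) (n-1)
            (X.s - (2*(n:ℝ)+9)*LL k j) (X.s + (2*(n:ℝ)+9)*LL k j) Lg Rg := by
          apply jump_done ihH hk _ _ (by omega) hp1 ?_ ?_ (by omega) hret hLR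
          · intro s hs
            rcases Finset.mem_insert.mp hs with rfl | hs'
            · exact List.mem_append_left _ hXmem
            · exact List.mem_append_left _ (hmem s hs')
          · intro s hs
            rcases Finset.mem_insert.mp hs with rfl | hs'
            · exact ⟨by linarith [hnl, hℓ], by rw [hXf]; linarith [hnl, hℓ]⟩
            · exact hbnd s hs'
        exact done_glue MR hd hsub1 (by rw [hc1]; omega) hMRlen hMRspan (le_refl _)
          (le_refl _) (le_refl Rg) (le_refl Lg)
      · -- MR refused while holding X: present ML
        have hMLlt : X.s - 3*LL k j/4 < X.s + LL k j/4 := by linarith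
        obtain ⟨ML, hMLs, hMLf⟩ : ∃ T : Ivl, T.s = X.s - 3*LL k j/4 ∧ T.f = X.s + LL k j/4 :=
          ⟨⟨_, _, hMLlt⟩, rfl, rfl⟩
        have hMLlen : ∃ i, 1 ≤ i ∧ i ≤ k ∧ ML.length = LL k i :=
          ⟨j, hj1, hjk, by simp only [Ivl.length, hMLf, hMLs]; ring⟩
        have hMLspan : X.s - (2*(n:ℝ)+9)*LL k j ≤ ML.s ∧ ML.f ≤ X.s + (2*(n:ℝ)+9)*LL k j := by
          constructor
          · rw [hMLs]; linarith [hnl, hℓ]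
          · rw [hMLf]; linarith [hnl, hℓ]
        have hconfML : ML.Conflict X := by
          rw [conflict_iff, hMLs, hMLf, hXf]; constructor <;> linarith
        have hneML : ML ≠ X := by
          intro he
          have h2 : ML.s = X.s := congrArg Ivl.s he
          rw [hMLs] at h2; linarith
        obtain ⟨hp1, hc1, hsub1⟩ := insert_save hpair hMRS
        have hMLS1 : ∀ s ∈ insert MR S, ¬ ML.Conflict s := by
          intro s hs
          rcases Finset.mem_insert.mp hs with rfl | hs'
          · rw [not_conflict_iff, hMLf]
            right; rw [hMRs]; linarith
          · rw [not_conflict_iff, hMLs, hMLf]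
            rcases hzone s hs' with h | h
            · left; linarith [hnl, hℓ]
            · right; linarith [hnl, hℓ]
        obtain ⟨hp2, hc2, hsub2⟩ := insert_save hp1 hMLS1
        have hmem2 : ∀ s ∈ insert ML (insert MR S), s ∈ (σ ++ [MR]) ++ [ML] := by
          intro s hs
          rcases Finset.mem_insert.mp hs with rfl | hs'
          · exact List.mem_append_right _ (List.mem_singleton_self _)
          rcases Finset.mem_insert.mp hs' with rfl | hs''
          · exact List.mem_append_left _ hMRmem
          · exact List.mem_append_left _ (List.mem_append_left _ (hmem s hs''))
        have hMLbnd : Lg ≤ ML.s ∧ ML.f ≤ Rg := by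
          constructor
          · rw [hMLs]; linarith [hnl, hℓ]
          · rw [hMLf]; linarith [hnl, hℓ]
        have hbnd2 : ∀ s ∈ insert ML (insert MR S), Lg ≤ s.s ∧ s.f ≤ Rg := by
          intro s hs
          rcases Finset.mem_insert.mp hs with rfl | hs'
          · exact hMLbnd
          rcases Finset.mem_insert.mp hs' with rfl | hs''
          · exact hMRbnd
          · exact hbnd s hs''
        rcases run_pair hret ML hconfML hneML with hretb | hretb | hretb
        · -- everything dropped: save MR and ML, jump
          by_cases hn2 : n ≤ 2
          · have hd : Done A k ((σ ++ [MR]) ++ [ML]) (insert ML (insert MR S)) 0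
                (X.s - (2*(n:ℝ)+9)*LL k j) (X.s + (2*(n:ℝ)+9)*LL k j) Lg Rg :=
              done_exit (le_refl _) (by omega) hp2 hmem2 (by rw [hretb]; simp)
            have hd2 := done_glue (n := n) ML hd (hsub1.trans hsub2) (by rw [hc2, hc1]; omega)
              hMLlen hMLspan (le_refl _) (le_refl _) (le_refl Rg) (le_refl Lg)
            exact done_glue MR hd2 (le_refl S) (le_refl _) hMRlen hMRspan (le_refl _) (le_refl _)
              (le_refl Rg) (le_refl Lg)
          · have hd : Done A k ((σ ++ [MR]) ++ [ML]) (insert ML (insert MR S)) (n-2)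
                (X.s - (2*(n:ℝ)+9)*LL k j) (X.s + (2*(n:ℝ)+9)*LL k j) Lg Rg :=
              jump_done ihH hk _ _ (by omega) hp2 hmem2 hbnd2 (by omega) hretb hLR
            have hd2 := done_glue (n := n) ML hd (hsub1.trans hsub2) (by rw [hc2, hc1]; omega)
              hMLlen hMLspan (le_refl _) (le_refl _) (le_refl Rg) (le_refl Lg)
            exact done_glue MR hd2 (le_refl S) (le_refl _) hMRlen hMRspan (le_refl _) (le_refl _)
              (le_refl Rg) (le_refl Lg)
        · -- cling: save MR and ML, descend inside X
          by_cases hn2 : n ≤ 2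
          · have hd : Done A k ((σ ++ [MR]) ++ [ML]) (insert ML (insert MR S)) 0
                (X.s - (2*(n:ℝ)+9)*LL k j) (X.s + (2*(n:ℝ)+9)*LL k j) Lg Rg :=
              done_exit (le_refl _) (by omega) hp2 hmem2 (by rw [hretb]; simp)
            have hd2 := done_glue (n := n) ML hd (hsub1.trans hsub2) (by rw [hc2, hc1]; omega)
              hMLlen hMLspan (le_refl _) (le_refl _) (le_refl Rg) (le_refl Lg)
            exact done_glue MR hd2 (le_refl S) (le_refl _) hMRlen hMRspan (le_refl _) (le_refl _)
              (le_refl Rg) (le_refl Lg)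
          · have hjk1 : j + 1 ≤ k := by omega
            have hw' := pitch_small k j (n-2) (by omega)
            have hd : Done A k ((σ ++ [MR]) ++ [ML]) (insert ML (insert MR S)) (n-2)
                (X.s + LL k j/3) (X.s + 2*LL k j/3) Lg Rg := by
              apply ihH A _ _ (n-2) (j+1) _ _ Lg Rg (some X) (by omega) hp2 hmem2 hbnd2
                (by omega) (by omega) hjk1 (by omega) hretb ?_ ?_ ?_ ?_ ?_
              · intro Y hY
                injection hY with hY'
                subst hY'
                intro y hy
                simp only [Set.mem_Ico] at hy
                simp only [Ivl.toSet, Set.mem_Ico]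
                constructor
                · linarith [hy.1, hℓ]
                · rw [hXf]; linarith [hy.2, hℓ]
              · intro s hs
                rcases Finset.mem_insert.mp hs with rfl | hs'
                · left; rw [hMLf]; linarith
                rcases Finset.mem_insert.mp hs' with rfl | hs''
                · right; rw [hMRs]; linarith
                · rcases hzone s hs'' with h | h
                  · left; linarith [hnl, hℓ]
                  · right; linarith [hnl, hℓ]
              · linarith [hw']
              · linarith [hnl, hℓ]
              · linarith [hnl, hℓ]
            have hd2 := done_glue (n := n) ML hd (hsub1.trans hsub2) (by rw [hc2, hc1]; omega)
              hMLlen hMLspan (by linarith [hnl, hℓ]) (by linarith [hnl, hℓ]) (le_refl Rg)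
              (le_refl Lg)
            exact done_glue MR hd2 (le_refl S) (le_refl _) hMRlen hMRspan (le_refl _) (le_refl _)
              (le_refl Rg) (le_refl Lg)
        · -- alg took ML: save MR and mirror into a leftward march
          have hYs : (mIvl ML).s = -(X.s + LL k j/4) := by
            simp only [mIvl_s, hMLf]
          have hYf : (mIvl ML).f = -(X.s - 3*LL k j/4) := by
            simp only [mIvl_f, hMLs]
          have hrun' : (mAlg A).run (((σ ++ [MR]) ++ [ML]).map mIvl) = {mIvl ML} := by
            rw [mAlg_run, hretb, Finset.image_singleton]
          have hFa := ihFa (mAlg A) (((σ ++ [MR]) ++ [ML]).map mIvl)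
            ((insert MR S).image mIvl) (n-1) j (-Rg) (-Lg) (mIvl ML) (by omega)
            (pairw_image hp1) ?_ ?_ (by omega) hj1 hjk (by omega) hrun'
            (by rw [hYs, hYf]; ring) ?_ ?_ ?_
          · have hmir : Done A k ((σ ++ [MR]) ++ [ML]) (insert MR S) (n-1)
                (X.s + LL k j/4 - (2*((n:ℝ)-1)+9)*LL k j)
                (X.s + LL k j/4 + (2*((n:ℝ)-1)+9)*LL k j) Lg Rg := by
              apply done_mirror ?_ ?_ hFa
              · rw [hYs, hcast]; ring
              · rw [hYs, hcast]; ring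
            have hd2 := done_glue (n := n) ML hmir hsub1 (by rw [hc1]; omega) hMLlen hMLspan
              (by linarith [hnl, hℓ]) (by linarith [hnl, hℓ]) (le_refl Rg) (le_refl Lg)
            exact done_glue MR hd2 (le_refl S) (le_refl _) hMRlen hMRspan (le_refl _) (le_refl _)
              (le_refl Rg) (le_refl Lg)
          · intro t ht
            rw [Finset.mem_image] at ht
            rcases ht with ⟨s, hs, rfl⟩
            exact List.mem_map_of_mem (f := mIvl) (by
              rcases Finset.mem_insert.mp hs with rfl | hs'
              · exact List.mem_append_left _ hMRmem
              · exact List.mem_append_left _ (List.mem_append_left _ (hmem s hs')))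
          · intro t ht
            rw [Finset.mem_image] at ht
            rcases ht with ⟨s, hs, rfl⟩
            have hb : Lg ≤ s.s ∧ s.f ≤ Rg := by
              rcases Finset.mem_insert.mp hs with rfl | hs'
              · exact hMRbnd
              · exact hbnd s hs'
            exact ⟨by simp only [mIvl_s]; linarith [hb.2], by simp only [mIvl_f]; linarith [hb.1]⟩
          · intro t ht
            rw [Finset.mem_image] at ht
            rcases ht with ⟨s, hs, rfl⟩
            simp only [mIvl_s, mIvl_f, hYs, hcast]
            rcases Finset.mem_insert.mp hs with rfl | hs'
            · left; rw [hMRs]; linarith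
            · rcases hzone s hs' with h | h
              · right; linarith [hnl, hℓ]
              · left; linarith [hnl, hℓ]
          · rw [hYs, hcast]; linarith [hℓ]
          · rw [hYs, hcast]; linarith [hℓ]
      · -- alg took MR: march right with predecessor X
        have hd : Done A k (σ ++ [MR]) S n (MR.s - (2*(n:ℝ)+8)*LL k j)
            (MR.s + (2*(n:ℝ)+8)*LL k j) Lg Rg := by
          apply ihT A (σ ++ [MR]) S n j Lg Rg MR X (by omega) hpair
            (fun s hs => List.mem_append_left _ (hmem s hs)) hbnd hnk hj1 hjk hnj hret
            (by rw [hMRf, hMRs]; ring) (by rw [hMRs]; ring)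
            (by rw [hXf, hMRs]; ring) (List.mem_append_left _ hXmem) ?_ ?_ ?_
          · intro s hs
            rw [hMRs]
            rcases hzone s hs with h | h
            · left; linarith [hnl, hℓ]
            · right; linarith [hnl, hℓ]
          · rw [hMRs]; linarith [hnl, hℓ]
          · rw [hMRs]; linarith [hnl, hℓ]
        refine done_glue MR hd (le_refl S) (le_refl _) hMRlen hMRspan ?_ ?_
          (le_refl Rg) (le_refl Lg)
        · rw [hMRs]; linarith [hnl, hℓ]
        · rw [hMRs]; linarith [hnl, hℓ]
    · -- T case
      intro A σ S n j Lg Rg X P hN hpair hmem hbnd hnk hj1 hjk hnj hrun hXf hPs hPf hPmem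
        hzone hLg hRg
      have hℓ : 0 < LL k j := LL_pos k j
      have hn0 : (0:ℝ) ≤ (n:ℝ) := Nat.cast_nonneg n
      have hk0 : (0:ℝ) ≤ (k:ℝ) := Nat.cast_nonneg k
      have hnl : 0 ≤ (n:ℝ) * LL k j := mul_nonneg hn0 hℓ.le
      have hXmem : X ∈ σ := A.mem_of_run σ X (by rw [hrun]; exact Finset.mem_singleton_self X)
      have hLR : Lg ≤ Rg := by linarith [hnl, hℓ]
      rcases Nat.eq_zero_or_pos n with rfl | hn1
      · exact done_exit (le_refl S) (by omega) hpair hmem (by rw [hrun]; simp)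
      have hnR1 : (1:ℝ) ≤ (n:ℝ) := by exact_mod_cast hn1
      have hcast : ((n-1:ℕ):ℝ) = (n:ℝ) - 1 := by rw [Nat.cast_sub hn1]; norm_num
      have hMRlt : X.s + 3*LL k j/4 < X.s + 7*LL k j/4 := by linarith
      obtain ⟨MR, hMRs, hMRf⟩ : ∃ T : Ivl, T.s = X.s + 3*LL k j/4 ∧ T.f = X.s + 7*LL k j/4 :=
        ⟨⟨_, _, hMRlt⟩, rfl, rfl⟩
      have hMRlen : ∃ i, 1 ≤ i ∧ i ≤ k ∧ MR.length = LL k i :=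
        ⟨j, hj1, hjk, by simp only [Ivl.length, hMRf, hMRs]; ring⟩
      have hMRspan : X.s - (2*(n:ℝ)+8)*LL k j ≤ MR.s ∧ MR.f ≤ X.s + (2*(n:ℝ)+8)*LL k j := by
        constructor
        · rw [hMRs]; linarith [hnl, hℓ]
        · rw [hMRf]; linarith [hnl, hℓ]
      have hconfMR : MR.Conflict X := by
        rw [conflict_iff, hMRs, hMRf, hXf]; constructor <;> linarith
      have hneMR : MR ≠ X := by
        intro he
        have h2 : MR.s = X.s := congrArg Ivl.s he
        rw [hMRs] at h2; linarith
      have hMRS : ∀ s ∈ S, ¬ MR.Conflict s := by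
        intro s hs
        rw [not_conflict_iff, hMRs, hMRf]
        rcases hzone s hs with h | h
        · left; linarith [hnl, hℓ]
        · right; linarith [hnl, hℓ]
      have hMRbnd : Lg ≤ MR.s ∧ MR.f ≤ Rg := by
        constructor
        · rw [hMRs]; linarith [hnl, hℓ]
        · rw [hMRf]; linarith [hnl, hℓ]
      have hMRmem : MR ∈ σ ++ [MR] := List.mem_append_right σ (List.mem_singleton_self _)
      have hPS : ∀ s ∈ S, ¬ P.Conflict s := by
        intro s hs
        rw [not_conflict_iff, hPs, hPf]
        rcases hzone s hs with h | h
        · left; linarith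
        · right; linarith [hnl, hℓ]
      have hPbnd : Lg ≤ P.s ∧ P.f ≤ Rg := by
        constructor
        · rw [hPs]; linarith [hnl, hℓ]
        · rw [hPf]; linarith [hnl, hℓ]
      rcases run_pair hrun MR hconfMR hneMR with hret | hret | hret
      · -- dropped: save X, jump
        have hXS : ∀ s ∈ S, ¬ X.Conflict s := by
          intro s hs
          rw [not_conflict_iff, hXf]
          rcases hzone s hs with h | h
          · left; linarith [hℓ]
          · right; linarith [hnl, hℓ]
        obtain ⟨hp1, hc1, hsub1⟩ := insert_save hpair hXS
        have hd : Done A k (σ ++ [MR]) (insert X S) (n-1)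
            (X.s - (2*(n:ℝ)+8)*LL k j) (X.s + (2*(n:ℝ)+8)*LL k j) Lg Rg := by
          apply jump_done ihH hk _ _ (by omega) hp1 ?_ ?_ (by omega) hret hLR
          · intro s hs
            rcases Finset.mem_insert.mp hs with rfl | hs'
            · exact List.mem_append_left _ hXmem
            · exact List.mem_append_left _ (hmem s hs')
          · intro s hs
            rcases Finset.mem_insert.mp hs with rfl | hs'
            · exact ⟨by linarith [hnl, hℓ], by rw [hXf]; linarith [hnl, hℓ]⟩
            · exact hbnd s hs'
        exact done_glue MR hd hsub1 (by rw [hc1]; omega) hMRlen hMRspan (le_refl _)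
          (le_refl _) (le_refl Rg) (le_refl Lg)
      · -- cling: save MR and the predecessor P, then descend inside X
        obtain ⟨hp1, hc1, hsub1⟩ := insert_save hpair hMRS
        have hPS1 : ∀ s ∈ insert MR S, ¬ P.Conflict s := by
          intro s hs
          rcases Finset.mem_insert.mp hs with rfl | hs'
          · rw [not_conflict_iff, hPf]
            right; rw [hMRs]; linarith
          · exact hPS s hs'
        obtain ⟨hp2, hc2, hsub2⟩ := insert_save hp1 hPS1
        have hmem2 : ∀ s ∈ insert P (insert MR S), s ∈ σ ++ [MR] := by
          intro s hs
          rcases Finset.mem_insert.mp hs with rfl | hs'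
          · exact List.mem_append_left _ hPmem
          rcases Finset.mem_insert.mp hs' with rfl | hs''
          · exact hMRmem
          · exact List.mem_append_left _ (hmem s hs'')
        have hbnd2 : ∀ s ∈ insert P (insert MR S), Lg ≤ s.s ∧ s.f ≤ Rg := by
          intro s hs
          rcases Finset.mem_insert.mp hs with rfl | hs'
          · exact hPbnd
          rcases Finset.mem_insert.mp hs' with rfl | hs''
          · exact hMRbnd
          · exact hbnd s hs''
        by_cases hn2 : n ≤ 2
        · have hd : Done A k (σ ++ [MR]) (insert P (insert MR S)) 0
              (X.s - (2*(n:ℝ)+8)*LL k j) (X.s + (2*(n:ℝ)+8)*LL k j) Lg Rg :=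
            done_exit (le_refl _) (by omega) hp2 hmem2 (by rw [hret]; simp)
          exact done_glue MR hd (hsub1.trans hsub2) (by rw [hc2, hc1]; omega) hMRlen hMRspan
            (le_refl _) (le_refl _) (le_refl Rg) (le_refl Lg)
        · have hjk1 : j + 1 ≤ k := by omega
          have hw' := pitch_small k j (n-2) (by omega)
          have hd : Done A k (σ ++ [MR]) (insert P (insert MR S)) (n-2)
              (X.s + LL k j/3) (X.s + 2*LL k j/3) Lg Rg := by
            apply ihH A _ _ (n-2) (j+1) _ _ Lg Rg (some X) (by omega) hp2 hmem2 hbnd2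
              (by omega) (by omega) hjk1 (by omega) hret ?_ ?_ ?_ ?_ ?_
            · intro Y hY
              injection hY with hY'
              subst hY'
              intro y hy
              simp only [Set.mem_Ico] at hy
              simp only [Ivl.toSet, Set.mem_Ico]
              constructor
              · linarith [hy.1, hℓ]
              · rw [hXf]; linarith [hy.2, hℓ]
            · intro s hs
              rcases Finset.mem_insert.mp hs with rfl | hs'
              · left; rw [hPf]; linarith
              rcases Finset.mem_insert.mp hs' with rfl | hs''
              · right; rw [hMRs]; linarith
              · rcases hzone s hs'' with h | h
                · left; linarith [hℓ]
                · right; linarith [hnl, hℓ]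
            · linarith [hw']
            · linarith [hnl, hℓ]
            · linarith [hnl, hℓ]
          exact done_glue MR hd (hsub1.trans hsub2) (by rw [hc2, hc1]; omega) hMRlen hMRspan
            (by linarith [hnl, hℓ]) (by linarith [hnl, hℓ]) (le_refl Rg) (le_refl Lg)
      · -- alg took MR: save predecessor P, march on (flag false)
        obtain ⟨hp1, hc1, hsub1⟩ := insert_save hpair hPS
        have hd : Done A k (σ ++ [MR]) (insert P S) (n-1)
            (MR.s - (2*((n:ℝ)-1)+9)*LL k j) (MR.s + (2*((n:ℝ)-1)+9)*LL k j) Lg Rg := by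
          have hd0 := ihFa A (σ ++ [MR]) (insert P S) (n-1) j Lg Rg MR (by omega) hp1 ?_ ?_
            (by omega) hj1 hjk (by omega) hret (by rw [hMRf, hMRs]; ring) ?_ ?_ ?_
          · rw [hcast] at hd0
            exact hd0
          · intro s hs
            rcases Finset.mem_insert.mp hs with rfl | hs'
            · exact List.mem_append_left _ hPmem
            · exact List.mem_append_left _ (hmem s hs')
          · intro s hs
            rcases Finset.mem_insert.mp hs with rfl | hs'
            · exact hPbnd
            · exact hbnd s hs'
          · intro s hs
            rw [hcast, hMRs]
            rcases Finset.mem_insert.mp hs with rfl | hs'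
            · left; rw [hPf]; linarith
            · rcases hzone s hs' with h | h
              · left; linarith
              · right; linarith [hℓ]
          · rw [hcast, hMRs]; linarith [hnl, hℓ]
          · rw [hcast, hMRs]; linarith [hnl, hℓ]
        refine done_glue MR hd hsub1 (by rw [hc1]; omega) hMRlen hMRspan ?_ ?_
          (le_refl Rg) (le_refl Lg)
        · rw [hMRs]; linarith [hnl, hℓ]
        · rw [hMRs]; linarith [hnl, hℓ]
    · -- Fa case
      intro A σ S n j Lg Rg X hN hpair hmem hbnd hnk hj1 hjk hnj hrun hXf hzone hLg hRg
      have hℓ : 0 < LL k j := LL_pos k j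
      have hn0 : (0:ℝ) ≤ (n:ℝ) := Nat.cast_nonneg n
      have hk0 : (0:ℝ) ≤ (k:ℝ) := Nat.cast_nonneg k
      have hnl : 0 ≤ (n:ℝ) * LL k j := mul_nonneg hn0 hℓ.le
      have hXmem : X ∈ σ := A.mem_of_run σ X (by rw [hrun]; exact Finset.mem_singleton_self X)
      have hLR : Lg ≤ Rg := by linarith [hnl, hℓ]
      rcases Nat.eq_zero_or_pos n with rfl | hn1
      · exact done_exit (le_refl S) (by omega) hpair hmem (by rw [hrun]; simp)
      have hnR1 : (1:ℝ) ≤ (n:ℝ) := by exact_mod_cast hn1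
      have hcast : ((n-1:ℕ):ℝ) = (n:ℝ) - 1 := by rw [Nat.cast_sub hn1]; norm_num
      have hMRlt : X.s + 3*LL k j/4 < X.s + 7*LL k j/4 := by linarith
      obtain ⟨MR, hMRs, hMRf⟩ : ∃ T : Ivl, T.s = X.s + 3*LL k j/4 ∧ T.f = X.s + 7*LL k j/4 :=
        ⟨⟨_, _, hMRlt⟩, rfl, rfl⟩
      have hMRlen : ∃ i, 1 ≤ i ∧ i ≤ k ∧ MR.length = LL k i :=
        ⟨j, hj1, hjk, by simp only [Ivl.length, hMRf, hMRs]; ring⟩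
      have hMRspan : X.s - (2*(n:ℝ)+9)*LL k j ≤ MR.s ∧ MR.f ≤ X.s + (2*(n:ℝ)+9)*LL k j := by
        constructor
        · rw [hMRs]; linarith [hnl, hℓ]
        · rw [hMRf]; linarith [hnl, hℓ]
      have hconfMR : MR.Conflict X := by
        rw [conflict_iff, hMRs, hMRf, hXf]; constructor <;> linarith
      have hneMR : MR ≠ X := by
        intro he
        have h2 : MR.s = X.s := congrArg Ivl.s he
        rw [hMRs] at h2; linarith
      have hMRS : ∀ s ∈ S, ¬ MR.Conflict s := by
        intro s hs
        rw [not_conflict_iff, hMRs, hMRf]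
        rcases hzone s hs with h | h
        · left; linarith [hℓ]
        · right; linarith [hnl, hℓ]
      have hMRbnd : Lg ≤ MR.s ∧ MR.f ≤ Rg := by
        constructor
        · rw [hMRs]; linarith [hnl, hℓ]
        · rw [hMRf]; linarith [hnl, hℓ]
      have hMRmem : MR ∈ σ ++ [MR] := List.mem_append_right σ (List.mem_singleton_self _)
      rcases run_pair hrun MR hconfMR hneMR with hret | hret | hret
      · -- dropped: save X, jump
        have hXS : ∀ s ∈ S, ¬ X.Conflict s := by
          intro s hs
          rw [not_conflict_iff, hXf]
          rcases hzone s hs with h | h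
          · left; linarith
          · right; linarith [hnl, hℓ]
        obtain ⟨hp1, hc1, hsub1⟩ := insert_save hpair hXS
        have hd : Done A k (σ ++ [MR]) (insert X S) (n-1)
            (X.s - (2*(n:ℝ)+9)*LL k j) (X.s + (2*(n:ℝ)+9)*LL k j) Lg Rg := by
          apply jump_done ihH hk _ _ (by omega) hp1 ?_ ?_ (by omega) hret hLR
          · intro s hs
            rcases Finset.mem_insert.mp hs with rfl | hs'
            · exact List.mem_append_left _ hXmem
            · exact List.mem_append_left _ (hmem s hs')
          · intro s hs
            rcases Finset.mem_insert.mp hs with rfl | hs'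
            · exact ⟨by linarith [hnl, hℓ], by rw [hXf]; linarith [hnl, hℓ]⟩
            · exact hbnd s hs'
        exact done_glue MR hd hsub1 (by rw [hc1]; omega) hMRlen hMRspan (le_refl _)
          (le_refl _) (le_refl Rg) (le_refl Lg)
      · -- cling: save MR, descend inside X
        obtain ⟨hp1, hc1, hsub1⟩ := insert_save hpair hMRS
        have hmem1 : ∀ s ∈ insert MR S, s ∈ σ ++ [MR] := by
          intro s hs
          rcases Finset.mem_insert.mp hs with rfl | hs'
          · exact hMRmem
          · exact List.mem_append_left _ (hmem s hs')
        have hbnd1 : ∀ s ∈ insert MR S, Lg ≤ s.s ∧ s.f ≤ Rg := by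
          intro s hs
          rcases Finset.mem_insert.mp hs with rfl | hs'
          · exact hMRbnd
          · exact hbnd s hs'
        by_cases hn2 : n ≤ 1
        · have hd : Done A k (σ ++ [MR]) (insert MR S) 0
              (X.s - (2*(n:ℝ)+9)*LL k j) (X.s + (2*(n:ℝ)+9)*LL k j) Lg Rg :=
            done_exit (le_refl _) (by omega) hp1 hmem1 (by rw [hret]; simp)
          exact done_glue MR hd hsub1 (by rw [hc1]; omega) hMRlen hMRspan
            (le_refl _) (le_refl _) (le_refl Rg) (le_refl Lg)
        · have hjk1 : j + 1 ≤ k := by omega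
          have hw' := pitch_small k j (n-1) (by omega)
          have hd : Done A k (σ ++ [MR]) (insert MR S) (n-1)
              (X.s + LL k j/3) (X.s + 2*LL k j/3) Lg Rg := by
            apply ihH A _ _ (n-1) (j+1) _ _ Lg Rg (some X) (by omega) hp1 hmem1 hbnd1
              (by omega) (by omega) hjk1 (by omega) hret ?_ ?_ ?_ ?_ ?_
            · intro Y hY
              injection hY with hY'
              subst hY'
              intro y hy
              simp only [Set.mem_Ico] at hy
              simp only [Ivl.toSet, Set.mem_Ico]
              constructor
              · linarith [hy.1, hℓ]
              · rw [hXf]; linarith [hy.2, hℓ]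
            · intro s hs
              rcases Finset.mem_insert.mp hs with rfl | hs'
              · right; rw [hMRs]; linarith
              · rcases hzone s hs' with h | h
                · left; linarith [hℓ]
                · right; linarith [hnl, hℓ]
            · linarith [hw']
            · linarith [hnl, hℓ]
            · linarith [hnl, hℓ]
          exact done_glue MR hd hsub1 (by rw [hc1]; omega) hMRlen hMRspan
            (by linarith [hnl, hℓ]) (by linarith [hnl, hℓ]) (le_refl Rg) (le_refl Lg)
      · -- alg took MR: march on, X becomes the new saveable predecessor (flag true)
        have hd : Done A k (σ ++ [MR]) S n
            (MR.s - (2*(n:ℝ)+8)*LL k j) (MR.s + (2*(n:ℝ)+8)*LL k j) Lg Rg := by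
          apply ihT A (σ ++ [MR]) S n j Lg Rg MR X (by omega) hpair
            (fun s hs => List.mem_append_left _ (hmem s hs)) hbnd hnk hj1 hjk (by omega) hret
            (by rw [hMRf, hMRs]; ring) (by rw [hMRs]; ring)
            (by rw [hXf, hMRs]; ring) (List.mem_append_left _ hXmem) ?_ ?_ ?_
          · intro s hs
            rw [hMRs]
            rcases hzone s hs with h | h
            · left; linarith [hℓ]
            · right; linarith [hnl, hℓ]
          · rw [hMRs]; linarith [hnl, hℓ]
          · rw [hMRs]; linarith [hnl, hℓ]
        refine done_glue MR hd (le_refl S) (le_refl _) hMRlen hMRspan ?_ ?_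
          (le_refl Rg) (le_refl Lg)
        · rw [hMRs]; linarith [hnl, hℓ]
        · rw [hMRs]; linarith [hnl, hℓ]

end LB

/-- No deterministic online algorithm with revocable acceptances achieves a competitive ratio
better than `2k` for unweighted interval selection with `k` distinct lengths: there is an
instance with at most `k` distinct lengths on which the algorithm keeps at most one interval
while the optimum is at least `2k`. -/
theorem deterministic_lower_bound_two_k (A : OnlineAlg) (k : ℕ) (hk : 1 ≤ k) :
    ∃ σ : List Ivl, (σ.map Ivl.length).toFinset.card ≤ k ∧
      (A.run σ).card ≤ 1 ∧ 2 * k ≤ opt σ := by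

  obtain ⟨hPH, -, -, -⟩ := LB.AllP k hk (8*(2*k)+7)
  obtain ⟨τ, S', h1, h2, h3, h4, h5, h6, h7⟩ :=
    hPH A [] ∅ (2*k) 1 0 (((((2*k : ℕ):ℝ))+1)*((8*(k:ℝ)+30)*LB.LL k 1)) (-1)
      (((((2*k : ℕ):ℝ))+1)*((8*(k:ℝ)+30)*LB.LL k 1)) none
      (le_refl _) LB.pairw_empty (by simp) (by simp) (le_refl _) (le_refl 1) hk (by omega)
      (LB.run_nil A) (fun Y hY => nomatch hY) (by simp) (by linarith) (by norm_num)
      (le_refl _)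
  refine ⟨τ, ?_, ?_, ?_⟩
  · refine LB.lengths_card_le (LB.LL k) ?_
    intro I hI
    exact h6 I hI
  · simpa using h5
  · have hcard : 2*k ≤ S'.card := by simpa using h2
    have hopt : S'.card ≤ opt τ := by
      refine LB.le_opt h3 ?_
      intro I hI
      simpa using h4 I hI
    omega
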